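/- Let X be a random vector in ℝ^d with density p₀ such that -log p₀ is m₀-strongly convex with unique minimizer x*. Then (E‖X‖²)^{1/2} ≤ √(2d/m₀) + ‖x*‖. -/

import Mathlib

open MeasureTheory Set Real Filter Pointwise


lemma intOn_exp (t : ℝ) : IntegrableOn (fun s : ℝ => Real.exp (-s)) (Set.Ioi t) := by
  have := exp_neg_integrableOn_Ioi t one_pos
  simpa using this

lemma lint_exp_Ioi (t : ℝ) :
    ∫⁻ s in Set.Ioi t, ENNReal.ofReal (Real.exp (-s)) = ENNReal.ofReal (Real.exp (-t)) := by
  rw [← ofReal_integral_eq_lintegral_ofReal (intOn_exp t)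
    (Filter.Eventually.of_forall fun x => (Real.exp_pos _).le), integral_exp_neg_Ioi]

lemma integrableOn_pow_mul_exp (n : ℕ) {t : ℝ} (ht : 0 ≤ t) :
    IntegrableOn (fun s : ℝ => s ^ n * Real.exp (-s)) (Set.Ioi t) := by
  have h := Real.GammaIntegral_convergent (s := n + 1) (by positivity)
  have h2 : IntegrableOn (fun s : ℝ => s ^ n * Real.exp (-s)) (Set.Ioi 0) := by
    refine h.congr_fun ?_ measurableSet_Ioi
    intro x hx
    simp only [add_sub_cancel_right, Real.rpow_natCast, mul_comm]
  exact h2.mono_set (Set.Ioi_subset_Ioi ht)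

lemma int_pow_mul_exp (n : ℕ) :
    ∫ s in Set.Ioi (0:ℝ), s ^ n * Real.exp (-s) = n.factorial := by
  have h := Real.integral_rpow_mul_exp_neg_mul_Ioi (a := n + 1) (r := 1) (by positivity) one_pos
  rw [add_sub_cancel_right, Real.Gamma_nat_eq_factorial] at h
  simp only [one_div_one, Real.one_rpow, one_mul] at h
  rw [← h]
  refine setIntegral_congr_fun measurableSet_Ioi (fun x hx => ?_)
  rw [Real.rpow_natCast, mul_comm]

lemma int_id_mul_exp {t : ℝ} (ht : 0 ≤ t) :
    ∫ s in Set.Ioi t, s * Real.exp (-s) = (t + 1) * Real.exp (-t) := by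
  have key : ∫ s in Set.Ioi t, s * Real.exp (-s) = 0 - (-(t + 1) * Real.exp (-t)) := by
    refine integral_Ioi_of_hasDerivAt_of_tendsto' (f := fun s => -(s+1) * Real.exp (-s))
      (fun x _ => ?_) ?_ ?_
    · have h1 : HasDerivAt (fun s : ℝ => -(s+1)) (-1) x := by
        exact ((hasDerivAt_id x).add_const 1).neg
      have h2 : HasDerivAt (fun s : ℝ => Real.exp (-s)) (-Real.exp (-x)) x := by
        convert (hasDerivAt_neg x).exp using 1; ring
      have := h1.mul h2
      exact this.congr_deriv (by ring)
    · have h := integrableOn_pow_mul_exp 1 ht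
      simpa using h
    · have h := tendsto_pow_mul_exp_neg_atTop_nhds_zero 1
      have h2 : Filter.Tendsto (fun s : ℝ => -(s+1) * Real.exp (-s)) Filter.atTop (nhds 0) := by
        have : (fun s : ℝ => -(s+1) * Real.exp (-s))
            = fun s : ℝ => -(s * Real.exp (-s)) - Real.exp (-s) := by funext s; ring
        rw [this]
        simpa using ((h.neg).sub (Real.tendsto_exp_neg_atTop_nhds_zero)).congr (fun s => by simp)
      exact h2
  rw [key]; ring

lemma lint_id_mul_exp {t : ℝ} (ht : 0 ≤ t) :
    ∫⁻ s in Set.Ioi t, ENNReal.ofReal (s * Real.exp (-s))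
      = ENNReal.ofReal ((t + 1) * Real.exp (-t)) := by
  rw [← ofReal_integral_eq_lintegral_ofReal (by have h := integrableOn_pow_mul_exp 1 ht; simp only [pow_one] at h; exact h) ?_,
    int_id_mul_exp ht]
  filter_upwards [self_mem_ae_restrict (measurableSet_Ioi)] with s hs
  have : (0:ℝ) < s := lt_of_le_of_lt ht hs
  positivity

lemma layercake_swap {α : Type*} [MeasurableSpace α] (μ : Measure α) [SigmaFinite μ]
    {V : α → ℝ} (hV : Measurable V) (hVnn : ∀ x, 0 ≤ V x)
    {w : ℝ → ℝ} (hw : Measurable w) :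
    ∫⁻ x, (∫⁻ s in Set.Ioi (V x), ENNReal.ofReal (w s)) ∂μ
      = ∫⁻ s in Set.Ioi 0, ENNReal.ofReal (w s) * μ {x | V x < s} := by
  have h1 : ∀ x, (∫⁻ s in Set.Ioi (V x), ENNReal.ofReal (w s))
      = ∫⁻ s in Set.Ioi 0, (Set.Ioi (V x)).indicator (fun s => ENNReal.ofReal (w s)) s := by
    intro x
    rw [lintegral_indicator measurableSet_Ioi, Measure.restrict_restrict measurableSet_Ioi]
    congr 1
    rw [Set.Ioi_inter_Ioi, max_eq_left (hVnn x)]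
  simp_rw [h1]
  rw [lintegral_lintegral_swap]
  · refine setLIntegral_congr_fun measurableSet_Ioi ?_
    intro s _
    beta_reduce
    have : ∀ x, (Set.Ioi (V x)).indicator (fun s => ENNReal.ofReal (w s)) s
        = ({x | V x < s}).indicator (fun _ => ENNReal.ofReal (w s)) x := by
      intro x
      simp only [Set.indicator_apply, Set.mem_Ioi, Set.mem_setOf_eq]
    simp_rw [this]
    have hms : MeasurableSet {x | V x < s} := by
      exact measurableSet_lt hV measurable_const
    exact lintegral_indicator_const hms _
  · have : (Function.uncurry fun x s => (Set.Ioi (V x)).indicator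
        (fun s => ENNReal.ofReal (w s)) s)
        = ({p : α × ℝ | V p.1 < p.2}).indicator (fun p => ENNReal.ofReal (w p.2)) := by
      funext p
      rcases p with ⟨x, s⟩
      simp only [Function.uncurry, Set.indicator_apply, Set.mem_Ioi, Set.mem_setOf_eq]
    rw [this]
    exact (Measurable.indicator ((hw.comp measurable_snd).ennreal_ofReal)
      (measurableSet_lt (hV.comp measurable_fst) measurable_snd)).aemeasurable

lemma integrableOn_pow_mul_exp' (n : ℕ) {t : ℝ} (ht : 0 ≤ t) :
    IntegrableOn (fun s : ℝ => s ^ n * Real.exp (-s)) (Set.Ioi t) := by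
  have h := Real.GammaIntegral_convergent (s := n + 1) (by positivity)
  have h2 : IntegrableOn (fun s : ℝ => s ^ n * Real.exp (-s)) (Set.Ioi 0) := by
    refine h.congr_fun ?_ measurableSet_Ioi
    intro x hx
    simp only [add_sub_cancel_right, Real.rpow_natCast, mul_comm]
  exact h2.mono_set (Set.Ioi_subset_Ioi ht)

lemma int_pow_mul_exp' (n : ℕ) :
    ∫ s in Set.Ioi (0:ℝ), s ^ n * Real.exp (-s) = n.factorial := by
  have h := Real.integral_rpow_mul_exp_neg_mul_Ioi (a := n + 1) (r := 1) (by positivity) one_pos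
  rw [add_sub_cancel_right, Real.Gamma_nat_eq_factorial] at h
  simp only [one_div_one, Real.one_rpow, one_mul] at h
  rw [← h]
  refine setIntegral_congr_fun measurableSet_Ioi (fun x hx => ?_)
  rw [Real.rpow_natCast, mul_comm]

lemma gamma_bridge (d : ℕ) :
    ∫⁻ s in Set.Ioc (0:ℝ) ((d:ℝ)+1), ENNReal.ofReal ((((d:ℝ)+1) - s) * s ^ d * Real.exp (-s))
      = ∫⁻ s in Set.Ioi ((d:ℝ)+1), ENNReal.ofReal ((s - ((d:ℝ)+1)) * s ^ d * Real.exp (-s)) := by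
  have hK : (0:ℝ) < (d:ℝ) + 1 := by positivity
  have hfint : IntegrableOn (fun s => (s - ((d:ℝ)+1)) * s ^ d * Real.exp (-s)) (Set.Ioi 0) := by
    have h1 := integrableOn_pow_mul_exp' (d+1) (le_refl (0:ℝ))
    have h2 := (integrableOn_pow_mul_exp' d (le_refl (0:ℝ))).const_mul ((d:ℝ)+1)
    refine IntegrableOn.congr_fun (h1.sub h2) (fun x hx => ?_) measurableSet_Ioi
    simp only [Pi.sub_apply]
    ring
  have hsplit := setIntegral_union (f := fun s => (s - ((d:ℝ)+1)) * s ^ d * Real.exp (-s))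
      (μ := volume) (Set.Ioc_disjoint_Ioi le_rfl) measurableSet_Ioi
      (hfint.mono_set Set.Ioc_subset_Ioi_self) (hfint.mono_set (Set.Ioi_subset_Ioi hK.le))
  rw [Set.Ioc_union_Ioi_eq_Ioi hK.le] at hsplit
  have htot : ∫ s in Set.Ioi (0:ℝ), (s - ((d:ℝ)+1)) * s ^ d * Real.exp (-s) = 0 := by
    have h1 := integrableOn_pow_mul_exp' (d+1) (le_refl (0:ℝ))
    have h2 := (integrableOn_pow_mul_exp' d (le_refl (0:ℝ))).const_mul ((d:ℝ)+1)
    have heq : ∫ s in Set.Ioi (0:ℝ), (s - ((d:ℝ)+1)) * s ^ d * Real.exp (-s)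
        = (∫ s in Set.Ioi (0:ℝ), s ^ (d+1) * Real.exp (-s))
          - ∫ s in Set.Ioi (0:ℝ), ((d:ℝ)+1) * (s ^ d * Real.exp (-s)) := by
      rw [← integral_sub h1 h2]
      refine setIntegral_congr_fun measurableSet_Ioi (fun x hx => ?_)
      ring
    rw [heq, integral_const_mul, int_pow_mul_exp', int_pow_mul_exp']
    push_cast [Nat.factorial_succ]
    ring
  have hIoc : ∫ s in Set.Ioc (0:ℝ) ((d:ℝ)+1), (((d:ℝ)+1) - s) * s ^ d * Real.exp (-s)
      = ∫ s in Set.Ioi ((d:ℝ)+1), (s - ((d:ℝ)+1)) * s ^ d * Real.exp (-s) := by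
    have hneg : ∫ s in Set.Ioc (0:ℝ) ((d:ℝ)+1), (((d:ℝ)+1) - s) * s ^ d * Real.exp (-s)
        = - ∫ s in Set.Ioc (0:ℝ) ((d:ℝ)+1), (s - ((d:ℝ)+1)) * s ^ d * Real.exp (-s) := by
      rw [← integral_neg]
      refine setIntegral_congr_fun measurableSet_Ioc (fun x hx => ?_)
      ring
    rw [hneg]
    rw [htot] at hsplit
    linarith
  rw [← ofReal_integral_eq_lintegral_ofReal
      (IntegrableOn.congr_fun ((hfint.mono_set Set.Ioc_subset_Ioi_self).neg)
        (fun x hx => by simp only [Pi.neg_apply]; ring) measurableSet_Ioc) ?_,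
    ← ofReal_integral_eq_lintegral_ofReal (hfint.mono_set (Set.Ioi_subset_Ioi hK.le)) ?_,
    hIoc]
  · filter_upwards [self_mem_ae_restrict measurableSet_Ioi] with s hs
    have h1 : (0:ℝ) < s := hK.trans hs
    have h2 : (d:ℝ)+1 ≤ s := le_of_lt hs
    have : 0 ≤ s - ((d:ℝ)+1) := by linarith
    positivity
  · filter_upwards [self_mem_ae_restrict measurableSet_Ioc] with s hs
    have h1 : (0:ℝ) < s := hs.1
    have h2 : s ≤ (d:ℝ)+1 := hs.2
    have : 0 ≤ ((d:ℝ)+1) - s := by linarith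
    positivity

lemma core_compare (d : ℕ) (φ : ℝ → ENNReal) (hφm : Measurable φ)
    (hscale : ∀ s t : ℝ, 0 < s → s ≤ t →
      ENNReal.ofReal (s ^ d) * φ t ≤ ENNReal.ofReal (t ^ d) * φ s) :
    ∫⁻ s in Set.Ioi (0:ℝ), ENNReal.ofReal (s * Real.exp (-s)) * φ s
      ≤ ENNReal.ofReal ((d:ℝ) + 1)
        * ∫⁻ s in Set.Ioi (0:ℝ), ENNReal.ofReal (Real.exp (-s)) * φ s := by
  set K : ℝ := (d:ℝ) + 1 with hKdef
  have hK : (0:ℝ) < K := by positivity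
  -- measurability helpers
  have hm1 : Measurable fun s : ℝ => ENNReal.ofReal ((s - K) * Real.exp (-s)) * φ s :=
    (((measurable_id.sub measurable_const).mul
      (Real.measurable_exp.comp measurable_neg)).ennreal_ofReal).mul hφm
  have hm2 : Measurable fun s : ℝ => ENNReal.ofReal (K * Real.exp (-s)) * φ s :=
    ((measurable_const.mul (Real.measurable_exp.comp measurable_neg)).ennreal_ofReal).mul hφm
  -- J2 ≤ J1
  have hJ : (∫⁻ s in Set.Ioi K, ENNReal.ofReal ((s - K) * Real.exp (-s)) * φ s)
      ≤ ∫⁻ s in Set.Ioc 0 K, ENNReal.ofReal ((K - s) * Real.exp (-s)) * φ s := by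
    rw [← ENNReal.mul_le_mul_iff_right (a := ENNReal.ofReal (K ^ d))
      (by simp [ENNReal.ofReal_pos.2 (pow_pos hK d), (ENNReal.ofReal_pos.2 (pow_pos hK d)).ne'])
      ENNReal.ofReal_ne_top]
    rw [← lintegral_const_mul _ hm1,
      ← lintegral_const_mul _ (show Measurable fun s : ℝ =>
        ENNReal.ofReal ((K - s) * Real.exp (-s)) * φ s by fun_prop)]
    calc ∫⁻ s in Set.Ioi K, ENNReal.ofReal (K ^ d) * (ENNReal.ofReal ((s - K) * Real.exp (-s)) * φ s)
        ≤ ∫⁻ s in Set.Ioi K, ENNReal.ofReal ((s - K) * s ^ d * Real.exp (-s)) * φ K := by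
          refine lintegral_mono_ae ?_
          filter_upwards [self_mem_ae_restrict measurableSet_Ioi] with s hs
          have hs0 : (0:ℝ) < s := hK.trans hs
          have hsK : K ≤ s := le_of_lt hs
          have hnn : 0 ≤ (s - K) * Real.exp (-s) := by
            have : 0 ≤ s - K := by linarith
            positivity
          calc ENNReal.ofReal (K ^ d) * (ENNReal.ofReal ((s - K) * Real.exp (-s)) * φ s)
              = ENNReal.ofReal ((s - K) * Real.exp (-s)) * (ENNReal.ofReal (K ^ d) * φ s) := by
                ring
            _ ≤ ENNReal.ofReal ((s - K) * Real.exp (-s)) * (ENNReal.ofReal (s ^ d) * φ K) :=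
                mul_le_mul_right (hscale K s hK hsK) _
            _ = ENNReal.ofReal ((s - K) * s ^ d * Real.exp (-s)) * φ K := by
                rw [← mul_assoc, ← ENNReal.ofReal_mul hnn]
                ring_nf
      _ = ∫⁻ s in Set.Ioc 0 K, ENNReal.ofReal ((K - s) * s ^ d * Real.exp (-s)) * φ K := by
          rw [lintegral_mul_const _ (by fun_prop), lintegral_mul_const _ (by fun_prop),
            ← gamma_bridge d]
      _ ≤ ∫⁻ s in Set.Ioc 0 K, ENNReal.ofReal (K ^ d) * (ENNReal.ofReal ((K - s) * Real.exp (-s)) * φ s) := by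
          refine lintegral_mono_ae ?_
          filter_upwards [self_mem_ae_restrict measurableSet_Ioc] with s hs
          have hs0 : (0:ℝ) < s := hs.1
          have hsK : s ≤ K := hs.2
          have hnn : 0 ≤ (K - s) * Real.exp (-s) := by
            have : 0 ≤ K - s := by linarith
            positivity
          calc ENNReal.ofReal ((K - s) * s ^ d * Real.exp (-s)) * φ K
              = ENNReal.ofReal ((K - s) * Real.exp (-s)) * (ENNReal.ofReal (s ^ d) * φ K) := by
                rw [← mul_assoc, ← ENNReal.ofReal_mul hnn]
                ring_nf
            _ ≤ ENNReal.ofReal ((K - s) * Real.exp (-s)) * (ENNReal.ofReal (K ^ d) * φ s) :=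
                mul_le_mul_right (hscale s K hs0 hsK) _
            _ = ENNReal.ofReal (K ^ d) * (ENNReal.ofReal ((K - s) * Real.exp (-s)) * φ s) := by
                ring
  -- split the domain
  have hsplitL : ∫⁻ s in Set.Ioi (0:ℝ), ENNReal.ofReal (s * Real.exp (-s)) * φ s
      = (∫⁻ s in Set.Ioc 0 K, ENNReal.ofReal (s * Real.exp (-s)) * φ s)
        + ∫⁻ s in Set.Ioi K, ENNReal.ofReal (s * Real.exp (-s)) * φ s := by
    rw [← lintegral_union measurableSet_Ioi (Set.Ioc_disjoint_Ioi le_rfl),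
      Set.Ioc_union_Ioi_eq_Ioi hK.le]
  have hsplitR : ∫⁻ s in Set.Ioi (0:ℝ), ENNReal.ofReal (K * Real.exp (-s)) * φ s
      = (∫⁻ s in Set.Ioc 0 K, ENNReal.ofReal (K * Real.exp (-s)) * φ s)
        + ∫⁻ s in Set.Ioi K, ENNReal.ofReal (K * Real.exp (-s)) * φ s := by
    rw [← lintegral_union measurableSet_Ioi (Set.Ioc_disjoint_Ioi le_rfl),
      Set.Ioc_union_Ioi_eq_Ioi hK.le]
  -- on Ioi K
  have hIoi : ∫⁻ s in Set.Ioi K, ENNReal.ofReal (s * Real.exp (-s)) * φ s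
      = (∫⁻ s in Set.Ioi K, ENNReal.ofReal (K * Real.exp (-s)) * φ s)
        + ∫⁻ s in Set.Ioi K, ENNReal.ofReal ((s - K) * Real.exp (-s)) * φ s := by
    rw [← lintegral_add_right _ hm1]
    refine setLIntegral_congr_fun measurableSet_Ioi ?_
    intro s hs
    beta_reduce
    have h1 : 0 ≤ K * Real.exp (-s) := by positivity
    have h2 : 0 ≤ (s - K) * Real.exp (-s) := by
      have : 0 ≤ s - K := by linarith [le_of_lt (Set.mem_Ioi.1 hs)]
      positivity
    rw [← add_mul, ← ENNReal.ofReal_add h1 h2]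
    congr 2
    ring
  -- on Ioc 0 K
  have hIoc : (∫⁻ s in Set.Ioc 0 K, ENNReal.ofReal (s * Real.exp (-s)) * φ s)
        + ∫⁻ s in Set.Ioc 0 K, ENNReal.ofReal ((K - s) * Real.exp (-s)) * φ s
      = ∫⁻ s in Set.Ioc 0 K, ENNReal.ofReal (K * Real.exp (-s)) * φ s := by
    rw [← lintegral_add_right _ (by fun_prop)]
    refine setLIntegral_congr_fun measurableSet_Ioc ?_
    intro s hs
    beta_reduce
    have h1 : 0 ≤ s * Real.exp (-s) := by
      have := hs.1.le
      positivity
    have h2 : 0 ≤ (K - s) * Real.exp (-s) := by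
      have : 0 ≤ K - s := by linarith [hs.2]
      positivity
    rw [← add_mul, ← ENNReal.ofReal_add h1 h2]
    congr 2
    ring
  have hfinal : ∫⁻ s in Set.Ioi (0:ℝ), ENNReal.ofReal (s * Real.exp (-s)) * φ s
      ≤ ∫⁻ s in Set.Ioi (0:ℝ), ENNReal.ofReal (K * Real.exp (-s)) * φ s := by
    rw [hsplitL, hsplitR, hIoi]
    calc (∫⁻ s in Set.Ioc 0 K, ENNReal.ofReal (s * Real.exp (-s)) * φ s)
          + ((∫⁻ s in Set.Ioi K, ENNReal.ofReal (K * Real.exp (-s)) * φ s)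
            + ∫⁻ s in Set.Ioi K, ENNReal.ofReal ((s - K) * Real.exp (-s)) * φ s)
        ≤ (∫⁻ s in Set.Ioc 0 K, ENNReal.ofReal (s * Real.exp (-s)) * φ s)
          + ((∫⁻ s in Set.Ioi K, ENNReal.ofReal (K * Real.exp (-s)) * φ s)
            + ∫⁻ s in Set.Ioc 0 K, ENNReal.ofReal ((K - s) * Real.exp (-s)) * φ s) := by
          gcongr
      _ = ((∫⁻ s in Set.Ioc 0 K, ENNReal.ofReal (s * Real.exp (-s)) * φ s)
            + ∫⁻ s in Set.Ioc 0 K, ENNReal.ofReal ((K - s) * Real.exp (-s)) * φ s)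
          + ∫⁻ s in Set.Ioi K, ENNReal.ofReal (K * Real.exp (-s)) * φ s := by
          ring
      _ = (∫⁻ s in Set.Ioc 0 K, ENNReal.ofReal (K * Real.exp (-s)) * φ s)
          + ∫⁻ s in Set.Ioi K, ENNReal.ofReal (K * Real.exp (-s)) * φ s := by
          rw [hIoc]
  refine hfinal.trans (le_of_eq ?_)
  rw [← lintegral_const_mul _ (by fun_prop : Measurable fun s : ℝ =>
    ENNReal.ofReal (Real.exp (-s)) * φ s)]
  refine setLIntegral_congr_fun measurableSet_Ioi ?_
  intro s hs
  beta_reduce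
  rw [← mul_assoc, ← ENNReal.ofReal_mul hK.le]

lemma scale_lemma {d : ℕ} {V : EuclideanSpace ℝ (Fin d) → ℝ}
    (hVconv : ConvexOn ℝ Set.univ V) (xstar : EuclideanSpace ℝ (Fin d))
    (hV0 : V xstar = 0) {s t : ℝ} (hs : 0 < s) (hst : s ≤ t) :
    ENNReal.ofReal (s ^ d) * volume {x | V x < t}
      ≤ ENNReal.ofReal (t ^ d) * volume {x | V x < s} := by
  have ht : (0:ℝ) < t := hs.trans_le hst
  set lam : ℝ := s / t with hlamdef
  have hlam0 : 0 < lam := div_pos hs ht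
  have hlam1 : lam ≤ 1 := (div_le_one ht).2 hst
  set D : ℝ → Set (EuclideanSpace ℝ (Fin d)) := fun r => {y | V (xstar + y) < r} with hDdef
  have hDvol : ∀ r, volume (D r) = volume {x | V x < r} := by
    intro r
    have hpre : (fun x => x + (-xstar)) ⁻¹' (D r) = {x | V x < r} := by
      ext x
      simp only [Set.mem_preimage, hDdef, Set.mem_setOf_eq]
      rw [← sub_eq_add_neg, add_sub_cancel]
    rw [← hpre, measure_preimage_add_right]
  have hsub : lam • D t ⊆ D s := by
    rintro z ⟨y, hy, rfl⟩
    simp only [hDdef, Set.mem_setOf_eq] at hy ⊢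
    have hconvineq := hVconv.2 (Set.mem_univ (xstar + y)) (Set.mem_univ xstar)
      hlam0.le (by linarith : (0:ℝ) ≤ 1 - lam) (by ring)
    have hpt : lam • (xstar + y) + (1 - lam) • xstar = xstar + lam • y := by
      rw [smul_add, sub_smul, one_smul]
      abel
    rw [hpt, hV0] at hconvineq
    have : V (xstar + lam • y) ≤ lam * V (xstar + y) := by
      simpa using hconvineq
    calc V (xstar + lam • y) ≤ lam * V (xstar + y) := this
      _ < lam * t := by
          exact (mul_lt_mul_iff_right₀ hlam0).2 hy
      _ = s := by
          rw [hlamdef]; field_simp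
  have hvol_smul : volume (lam • D t) = ENNReal.ofReal (lam ^ d) * volume (D t) := by
    rw [Measure.addHaar_smul_of_nonneg volume hlam0.le, finrank_euclideanSpace_fin]
  have hmono : ENNReal.ofReal (lam ^ d) * volume (D t) ≤ volume (D s) := by
    rw [← hvol_smul]
    exact measure_mono hsub
  have : ENNReal.ofReal (t ^ d) * (ENNReal.ofReal (lam ^ d) * volume (D t))
      ≤ ENNReal.ofReal (t ^ d) * volume (D s) := mul_le_mul_right hmono _
  rw [← mul_assoc, ← ENNReal.ofReal_mul (by positivity)] at this
  have hpow : t ^ d * lam ^ d = s ^ d := by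
    rw [hlamdef, ← mul_pow]
    congr 1
    field_simp
  rw [hpow] at this
  rw [← hDvol t, ← hDvol s]
  exact this

lemma growth_lemma {d : ℕ} {U : EuclideanSpace ℝ (Fin d) → ℝ} {m₀ : ℝ}
    (hconv : StrongConvexOn Set.univ m₀ U) (xstar : EuclideanSpace ℝ (Fin d))
    (hmin : ∀ x, U xstar ≤ U x) (y : EuclideanSpace ℝ (Fin d)) :
    m₀ / 2 * ‖y - xstar‖ ^ 2 ≤ U y - U xstar := by
  have key : ∀ a ∈ Set.Ioo (0:ℝ) 1,
      (1 - a) * (m₀ / 2 * ‖y - xstar‖ ^ 2) ≤ U y - U xstar := by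
    intro a ha
    have h := hconv.2 (Set.mem_univ y) (Set.mem_univ xstar) ha.1.le
      (by linarith [ha.2] : (0:ℝ) ≤ 1 - a) (by ring)
    simp only [smul_eq_mul] at h
    have hge := hmin (a • y + (1 - a) • xstar)
    have ha0 := ha.1
    nlinarith [h, hge]
  have htend : Tendsto (fun a : ℝ => (1 - a) * (m₀ / 2 * ‖y - xstar‖ ^ 2))
      (nhdsWithin 0 (Set.Ioi 0)) (nhds (m₀ / 2 * ‖y - xstar‖ ^ 2)) := by
    have : Continuous (fun a : ℝ => (1 - a) * (m₀ / 2 * ‖y - xstar‖ ^ 2)) := by continuity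
    have h := (this.tendsto 0).mono_left (nhdsWithin_le_nhds (s := Set.Ioi 0))
    simpa using h
  refine le_of_tendsto htend ?_
  filter_upwards [Ioo_mem_nhdsGT_of_mem (by norm_num : (0:ℝ) ∈ Set.Ico (0:ℝ) 1)] with a ha
  exact key a ha
theorem second_moment_bound_strongly_log_concave {d : ℕ}
    (p₀ : EuclideanSpace ℝ (Fin d) → ℝ) (m₀ : ℝ) (hm₀ : 0 < m₀)
    (hdiff : Differentiable ℝ p₀) (hpos : ∀ x, 0 < p₀ x)
    (hint : ∫ x, p₀ x = 1)
    (hconv : StrongConvexOn Set.univ m₀ (fun x => -Real.log (p₀ x)))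
    (xstar : EuclideanSpace ℝ (Fin d))
    (hmin : ∀ x, -Real.log (p₀ xstar) ≤ -Real.log (p₀ x))
    (huniq : ∀ x, -Real.log (p₀ x) = -Real.log (p₀ xstar) → x = xstar) :
    Real.sqrt (∫ x, ‖x‖ ^ 2 * p₀ x) ≤ Real.sqrt (2 * d / m₀) + ‖xstar‖ := by
  classical
  set U : EuclideanSpace ℝ (Fin d) → ℝ := fun x => -Real.log (p₀ x) with hUdef
  set V : EuclideanSpace ℝ (Fin d) → ℝ := fun x => U x - U xstar with hVdef
  set c : ℝ := p₀ xstar with hcdef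
  have hc : 0 < c := hpos xstar
  -- continuity and measurability
  have hp₀c : Continuous p₀ := hdiff.continuous
  have hUcont : Continuous U := by
    refine continuous_iff_continuousAt.2 fun x => ?_
    exact ((Real.continuousAt_log (hpos x).ne').comp hp₀c.continuousAt).neg
  have hVcont : Continuous V := hUcont.sub continuous_const
  have hVmeas : Measurable V := hVcont.measurable
  have hV0 : V xstar = 0 := sub_self _
  have hVnn : ∀ x, 0 ≤ V x := fun x => sub_nonneg.2 (hmin x)
  -- quadratic growth
  have hgrow : ∀ y, m₀ / 2 * ‖y - xstar‖ ^ 2 ≤ V y := fun y =>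
    growth_lemma hconv xstar hmin y
  -- convexity of V
  have hUconv : ConvexOn ℝ Set.univ U := hconv.convexOn (fun r => by positivity)
  have hVconv : ConvexOn ℝ Set.univ V := by
    have h := hUconv.add_const (-(U xstar))
    have e : V = U + fun x => -U xstar := by
      funext x
      simp [hVdef, sub_eq_add_neg]
    rw [e]
    exact h
  -- level set volumes
  set φ : ℝ → ENNReal := fun s => volume {x | V x < s} with hφdef
  have hφmono : Monotone φ := fun s t hst =>
    measure_mono (fun x hx => lt_of_lt_of_le hx hst)
  have hφm : Measurable φ := hφmono.measurable
  have hscale : ∀ s t : ℝ, 0 < s → s ≤ t →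
      ENNReal.ofReal (s ^ d) * φ t ≤ ENNReal.ofReal (t ^ d) * φ s :=
    fun s t hs hst => scale_lemma hVconv xstar hV0 hs hst
  -- the two lintegrals
  set A : ENNReal := ∫⁻ x, ENNReal.ofReal (Real.exp (-(V x))) with hAdef
  set B : ENNReal := ∫⁻ x, ENNReal.ofReal ((V x + 1) * Real.exp (-(V x))) with hBdef
  have hA : A = ∫⁻ s in Set.Ioi (0:ℝ), ENNReal.ofReal (Real.exp (-s)) * φ s := by
    rw [hAdef, ← layercake_swap volume hVmeas hVnn
      (w := fun s => Real.exp (-s)) (by fun_prop)]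
    exact lintegral_congr fun x => (lint_exp_Ioi (V x)).symm
  have hB : B = ∫⁻ s in Set.Ioi (0:ℝ), ENNReal.ofReal (s * Real.exp (-s)) * φ s := by
    rw [hBdef, ← layercake_swap volume hVmeas hVnn
      (w := fun s => s * Real.exp (-s)) (by fun_prop)]
    exact lintegral_congr fun x => (lint_id_mul_exp (hVnn x)).symm
  have hBA : B ≤ ENNReal.ofReal ((d:ℝ) + 1) * A := by
    rw [hA, hB]
    exact core_compare d φ hφm hscale
  -- normalization
  have hInt : Integrable p₀ := by
    by_contra h
    rw [integral_undef h] at hint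
    exact one_ne_zero hint.symm
  have hp₀eq : ∀ x, p₀ x = c * Real.exp (-(V x)) := by
    intro x
    have hv : -(V x) = Real.log (p₀ x) - Real.log c := by
      simp only [hVdef, hUdef]
      ring
    rw [hv, Real.exp_sub, Real.exp_log (hpos x), Real.exp_log hc]
    field_simp
  have hlint_p : ∫⁻ x, ENNReal.ofReal (p₀ x) = 1 := by
    rw [← ofReal_integral_eq_lintegral_ofReal hInt
      (Filter.Eventually.of_forall fun x => (hpos x).le), hint, ENNReal.ofReal_one]
  have hcA : ENNReal.ofReal c * A = 1 := by
    rw [hAdef, ← lintegral_const_mul _ (by fun_prop : Measurable fun x =>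
      ENNReal.ofReal (Real.exp (-(V x)))), ← hlint_p]
    refine lintegral_congr fun x => ?_
    rw [← ENNReal.ofReal_mul hc.le, ← hp₀eq x]
  have hofc_ne : ENNReal.ofReal c ≠ 0 := (ENNReal.ofReal_pos.2 hc).ne'
  have hAtop : A ≠ ⊤ := by
    intro h
    rw [h, ENNReal.mul_top hofc_ne] at hcA
    exact ENNReal.top_ne_one hcA
  -- extract ∫⁻ V e^{-V} ≤ d * A
  set X : ENNReal := ∫⁻ x, ENNReal.ofReal (V x * Real.exp (-(V x))) with hXdef
  have hXA : X + A = B := by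
    rw [hXdef, hAdef, hBdef, ← lintegral_add_right _ (by fun_prop : Measurable fun x =>
      ENNReal.ofReal (Real.exp (-(V x))))]
    refine lintegral_congr fun x => ?_
    rw [← ENNReal.ofReal_add (mul_nonneg (hVnn x) (Real.exp_pos _).le) (Real.exp_pos _).le]
    congr 1
    ring
  have hXle : X ≤ ENNReal.ofReal (d:ℝ) * A := by
    have hK : ENNReal.ofReal ((d:ℝ) + 1) = ENNReal.ofReal (d:ℝ) + 1 := by
      rw [ENNReal.ofReal_add (by positivity) zero_le_one, ENNReal.ofReal_one]
    have h1 : X + A ≤ ENNReal.ofReal (d:ℝ) * A + A := by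
      rw [hXA]
      calc B ≤ ENNReal.ofReal ((d:ℝ) + 1) * A := hBA
        _ = ENNReal.ofReal (d:ℝ) * A + A := by rw [hK, add_mul, one_mul]
    exact (ENNReal.add_le_add_iff_right hAtop).1 h1
  -- ∫⁻ V p₀ ≤ d
  have hVp : ∫⁻ x, ENNReal.ofReal (V x * p₀ x) ≤ ENNReal.ofReal (d:ℝ) := by
    have heq : ∫⁻ x, ENNReal.ofReal (V x * p₀ x) = ENNReal.ofReal c * X := by
      rw [hXdef, ← lintegral_const_mul _ (by fun_prop : Measurable fun x =>
        ENNReal.ofReal (V x * Real.exp (-(V x))))]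
      refine lintegral_congr fun x => ?_
      rw [← ENNReal.ofReal_mul hc.le]
      congr 1
      rw [hp₀eq x]
      ring
    rw [heq]
    calc ENNReal.ofReal c * X ≤ ENNReal.ofReal c * (ENNReal.ofReal (d:ℝ) * A) :=
          mul_le_mul_right hXle _
      _ = ENNReal.ofReal (d:ℝ) * (ENNReal.ofReal c * A) := by ring
      _ = ENNReal.ofReal (d:ℝ) := by rw [hcA, mul_one]
  -- second moment lintegral bound
  have hmom : ∫⁻ x, ENNReal.ofReal (‖x - xstar‖ ^ 2 * p₀ x)
      ≤ ENNReal.ofReal (2 * (d:ℝ) / m₀) := by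
    have hhalf : (0:ℝ) < m₀ / 2 := by positivity
    have h1 : ENNReal.ofReal (m₀ / 2) * ∫⁻ x, ENNReal.ofReal (‖x - xstar‖ ^ 2 * p₀ x)
        ≤ ENNReal.ofReal (d:ℝ) := by
      rw [← lintegral_const_mul _ (by fun_prop : Measurable fun x =>
        ENNReal.ofReal (‖x - xstar‖ ^ 2 * p₀ x))]
      refine le_trans (lintegral_mono fun x => ?_) hVp
      rw [← ENNReal.ofReal_mul hhalf.le]
      refine ENNReal.ofReal_le_ofReal ?_
      have := hgrow x
      nlinarith [(hpos x).le, hgrow x]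
    calc ∫⁻ x, ENNReal.ofReal (‖x - xstar‖ ^ 2 * p₀ x)
        = (ENNReal.ofReal (m₀ / 2))⁻¹
          * (ENNReal.ofReal (m₀ / 2) * ∫⁻ x, ENNReal.ofReal (‖x - xstar‖ ^ 2 * p₀ x)) := by
          rw [← mul_assoc, ENNReal.inv_mul_cancel (ENNReal.ofReal_pos.2 hhalf).ne'
            ENNReal.ofReal_ne_top, one_mul]
      _ ≤ (ENNReal.ofReal (m₀ / 2))⁻¹ * ENNReal.ofReal (d:ℝ) := mul_le_mul_right h1 _
      _ = ENNReal.ofReal (2 * (d:ℝ) / m₀) := by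
          rw [← ENNReal.ofReal_inv_of_pos hhalf, ← ENNReal.ofReal_mul (by positivity)]
          congr 1
          field_simp
  -- integrability of the second moment
  have hgcont : Continuous fun x : EuclideanSpace ℝ (Fin d) => ‖x - xstar‖ ^ 2 * p₀ x := by
    exact (((continuous_id.sub continuous_const).norm.pow 2).mul hp₀c)
  have hgInt : Integrable (fun x : EuclideanSpace ℝ (Fin d) => ‖x - xstar‖ ^ 2 * p₀ x) := by
    refine ⟨hgcont.aestronglyMeasurable, ?_⟩
    rw [hasFiniteIntegral_iff_ofReal (Filter.Eventually.of_forall fun x => mul_nonneg (by positivity) (hpos x).le)]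
    exact lt_of_le_of_lt hmom ENNReal.ofReal_lt_top
  have hgval : ∫ x, ‖x - xstar‖ ^ 2 * p₀ x ≤ 2 * (d:ℝ) / m₀ := by
    rw [integral_eq_lintegral_of_nonneg_ae (Filter.Eventually.of_forall fun x => mul_nonneg (by positivity) (hpos x).le)
      hgcont.aestronglyMeasurable]
    calc (∫⁻ x, ENNReal.ofReal (‖x - xstar‖ ^ 2 * p₀ x)).toReal
        ≤ (ENNReal.ofReal (2 * (d:ℝ) / m₀)).toReal :=
          ENNReal.toReal_mono ENNReal.ofReal_ne_top hmom
      _ = 2 * (d:ℝ) / m₀ := ENNReal.toReal_ofReal (by positivity)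
  -- final step
  by_cases hd : d = 0
  · subst hd
    have hzero : ∀ x : EuclideanSpace ℝ (Fin 0), ‖x‖ ^ 2 * p₀ x = 0 := by
      intro x
      have : x = 0 := Subsingleton.elim x 0
      rw [this]
      simp
    rw [show (∫ x, ‖x‖ ^ 2 * p₀ x) = 0 by
      rw [← integral_zero (EuclideanSpace ℝ (Fin 0)) ℝ]; exact integral_congr_ae (Filter.Eventually.of_forall hzero)]
    rw [Real.sqrt_zero]
    positivity
  · have hdpos : (0:ℝ) < d := by exact_mod_cast Nat.pos_of_ne_zero hd
    set R : ℝ := Real.sqrt (2 * (d:ℝ) / m₀) with hRdef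
    have hR : 0 < R := Real.sqrt_pos.2 (by positivity)
    have hR2 : R ^ 2 = 2 * (d:ℝ) / m₀ := Real.sq_sqrt (by positivity)
    set b : ℝ := ‖xstar‖ with hbdef
    have hb0 : 0 ≤ b := norm_nonneg _
    have hpt : ∀ x : EuclideanSpace ℝ (Fin d), ‖x‖ ^ 2 * p₀ x
        ≤ (1 + b / R) * (‖x - xstar‖ ^ 2 * p₀ x) + (b * R + b ^ 2) * p₀ x := by
      intro x
      have tri : ‖x‖ ≤ ‖x - xstar‖ + b := by
        calc ‖x‖ = ‖x - xstar + xstar‖ := by rw [sub_add_cancel]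
          _ ≤ ‖x - xstar‖ + b := norm_add_le _ _
      have hsq : ‖x‖ ^ 2 ≤ (‖x - xstar‖ + b) ^ 2 :=
        pow_le_pow_left₀ (norm_nonneg x) tri 2
      have key : 2 * ‖x - xstar‖ ≤ ‖x - xstar‖ ^ 2 / R + R := by
        rw [← sub_nonneg]
        have heq : ‖x - xstar‖ ^ 2 / R + R - 2 * ‖x - xstar‖
            = (‖x - xstar‖ - R) ^ 2 / R := by
          field_simp
          ring
        rw [heq]
        positivity
      have hb2 : ‖x‖ ^ 2 ≤ (1 + b / R) * ‖x - xstar‖ ^ 2 + (b * R + b ^ 2) := by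
        have hkb := mul_le_mul_of_nonneg_left key hb0
        have expand : (‖x - xstar‖ + b) ^ 2
            = ‖x - xstar‖ ^ 2 + b * (2 * ‖x - xstar‖) + b ^ 2 := by ring
        have : b * (‖x - xstar‖ ^ 2 / R + R) = (b / R) * ‖x - xstar‖ ^ 2 + b * R := by
          field_simp
        nlinarith [hsq, hkb]
      calc ‖x‖ ^ 2 * p₀ x ≤ ((1 + b / R) * ‖x - xstar‖ ^ 2 + (b * R + b ^ 2)) * p₀ x :=
            mul_le_mul_of_nonneg_right hb2 (hpos x).le
        _ = (1 + b / R) * (‖x - xstar‖ ^ 2 * p₀ x) + (b * R + b ^ 2) * p₀ x := by ring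
    have hRHSInt : Integrable (fun x : EuclideanSpace ℝ (Fin d) =>
        (1 + b / R) * (‖x - xstar‖ ^ 2 * p₀ x) + (b * R + b ^ 2) * p₀ x) :=
      (hgInt.const_mul _).add (hInt.const_mul _)
    have hLInt : Integrable (fun x : EuclideanSpace ℝ (Fin d) => ‖x‖ ^ 2 * p₀ x) := by
      refine Integrable.mono' hRHSInt ((((continuous_norm.pow 2)).mul hp₀c).aestronglyMeasurable)
        (Filter.Eventually.of_forall fun x => ?_)
      rw [Real.norm_of_nonneg (mul_nonneg (by positivity) (hpos x).le)]
      exact hpt x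
    have hIle : ∫ x, ‖x‖ ^ 2 * p₀ x ≤ (R + b) ^ 2 := by
      calc ∫ x, ‖x‖ ^ 2 * p₀ x
          ≤ ∫ x, ((1 + b / R) * (‖x - xstar‖ ^ 2 * p₀ x) + (b * R + b ^ 2) * p₀ x) :=
            integral_mono hLInt hRHSInt hpt
        _ = (1 + b / R) * (∫ x, ‖x - xstar‖ ^ 2 * p₀ x) + (b * R + b ^ 2) * ∫ x, p₀ x := by
            rw [integral_add (hgInt.const_mul _) (hInt.const_mul _),
              integral_const_mul, integral_const_mul]
        _ ≤ (1 + b / R) * R ^ 2 + (b * R + b ^ 2) * 1 := by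
            have hcoef : (0:ℝ) ≤ 1 + b / R := by positivity
            rw [hint]
            have := hgval
            rw [← hR2] at this
            nlinarith [mul_le_mul_of_nonneg_left this hcoef]
        _ = (R + b) ^ 2 := by
            field_simp
    calc Real.sqrt (∫ x, ‖x‖ ^ 2 * p₀ x) ≤ Real.sqrt ((R + b) ^ 2) :=
          Real.sqrt_le_sqrt hIle
      _ = R + b := Real.sqrt_sq (by positivity)
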